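/- For a chain of L qubits (L ≥ 2), consider the super-Hamiltonian P_{Z2} = 2 Σ_j (1 − Z_{j,t} Z_{j,b}) + 2 Σ_j (1 − X_{j,t} X_{j,b} X_{j+1,t} X_{j+1,b}) acting on the doubled space (C² ⊗ C²)^{⊗L} with periodic boundary conditions. All terms of P_{Z2} pairwise commute, P_{Z2} is positive semi-definite, and its kernel is exactly 2-dimensional, spanned by the vectorizations of the identity operator and of the product Z_1 Z_2 ⋯ Z_L. -/

import Mathlib

open Matrix
open scoped ComplexOrder

noncomputable section

namespace Z2Super

/-- Doubled (ladder) configurations: a spin configuration for the top leg and one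
for the bottom leg of the 2-leg ladder of length `L`. -/
abbrev Config (L : ℕ) := (Fin L → Fin 2) × (Fin L → Fin 2)

/-- Eigenvalue of the Pauli `Z` on a basis state: `+1` for `↑` and `−1` for `↓`. -/
def zval : Fin 2 → ℂ := fun b => if b = 0 then 1 else -1

/-- Flip the spin at site `j`. -/
def flip {L : ℕ} [NeZero L] (j : Fin L) (s : Fin L → Fin 2) : Fin L → Fin 2 :=
  Function.update s j (s j + 1)

/-- The rung term `2 (1 − Z_{j,t} Z_{j,b})` of the super-Hamiltonian (diagonal). -/
def rungTerm {L : ℕ} (j : Fin L) : Matrix (Config L) (Config L) ℂ :=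
  Matrix.of fun p q => if p = q then 2 * (1 - zval (p.1 j) * zval (p.2 j)) else 0

/-- The term `2 (1 − X_{j,t} X_{j,b} X_{j+1,t} X_{j+1,b})` (periodic boundary
conditions: `j+1` is taken cyclically). -/
def xTerm {L : ℕ} [NeZero L] (j : Fin L) : Matrix (Config L) (Config L) ℂ :=
  (2 : ℂ) • ((1 : Matrix (Config L) (Config L) ℂ)
    - Matrix.of fun p q =>
        if q = (flip j (flip (j + 1) p.1), flip j (flip (j + 1) p.2)) then 1 else 0)

/-- The family of all terms of the super-Hamiltonian `P_{Z2}`. -/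
def term (L : ℕ) [NeZero L] : Fin L ⊕ Fin L → Matrix (Config L) (Config L) ℂ :=
  Sum.elim rungTerm xTerm

/-- The `Z₂` super-Hamiltonian
`P_{Z2} = 2 Σ_j (1 − Z_{j,t}Z_{j,b}) + 2 Σ_j (1 − X_{j,t}X_{j,b}X_{j+1,t}X_{j+1,b})`. -/
def PZ2 (L : ℕ) [NeZero L] : Matrix (Config L) (Config L) ℂ :=
  (∑ j, rungTerm j) + ∑ j, xTerm j

/-- Vectorization of the identity operator. -/
def vId (L : ℕ) : Config L → ℂ := fun p => if p.1 = p.2 then 1 else 0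

/-- Vectorization of the product `Z_1 Z_2 ⋯ Z_L`. -/
def vZ (L : ℕ) : Config L → ℂ := fun p => if p.1 = p.2 then ∏ j, zval (p.1 j) else 0

section Aux

variable {L : ℕ} [NeZero L]

lemma add11 (a : Fin 2) : a + 1 + 1 = a := by fin_cases a <;> rfl

lemma flip_apply (j : Fin L) (s : Fin L → Fin 2) (m : Fin L) :
    flip j s m = if m = j then s m + 1 else s m := by
  rcases eq_or_ne m j with rfl | h
  · rw [flip, Function.update_self, if_pos rfl]
  · rw [flip, Function.update_of_ne h, if_neg h]

lemma flip_flip_self (j : Fin L) (s : Fin L → Fin 2) : flip j (flip j s) = s := by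
  funext m
  simp only [flip_apply]
  split_ifs <;> simp_all [add11]

lemma flip_comm (j k : Fin L) (s : Fin L → Fin 2) :
    flip j (flip k s) = flip k (flip j s) := by
  funext m
  simp only [flip_apply]
  split_ifs <;> rfl

def sigma (j : Fin L) (p : Config L) : Config L :=
  (flip j (flip (j + 1) p.1), flip j (flip (j + 1) p.2))

lemma quad (j k : Fin L) (s : Fin L → Fin 2) :
    flip j (flip k (flip j (flip k s))) = s := by
  rw [flip_comm k j, flip_flip_self, flip_flip_self]

lemma sigma_sigma (j : Fin L) (p : Config L) : sigma j (sigma j p) = p := by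
  cases p with
  | mk s t => simp only [sigma, quad]

lemma sigma_comm (j k : Fin L) (p : Config L) :
    sigma j (sigma k p) = sigma k (sigma j p) := by
  cases p with
  | mk s t =>
    simp only [sigma, Prod.mk.injEq]
    constructor <;> · funext m; simp only [flip_apply]; split_ifs <;> rfl

lemma sigma_eq_iff (j : Fin L) (p q : Config L) : p = sigma j q ↔ q = sigma j p := by
  constructor <;> (rintro rfl; rw [sigma_sigma])

lemma zval_add_one (a : Fin 2) : zval (a + 1) = -zval a := by
  fin_cases a <;> simp [zval]

lemma zval_mul (a b : Fin 2) : zval a * zval b = if a = b then 1 else -1 := by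
  fin_cases a <;> fin_cases b <;> norm_num [zval]

lemma prod_flip (j : Fin L) (s : Fin L → Fin 2) :
    ∏ m, zval (flip j s m) = -∏ m, zval (s m) := by
  have h1 := Finset.mul_prod_erase Finset.univ (fun m => zval (flip j s m)) (Finset.mem_univ j)
  have h2 := Finset.mul_prod_erase Finset.univ (fun m => zval (s m)) (Finset.mem_univ j)
  have h3 : ∀ m ∈ Finset.univ.erase j, zval (flip j s m) = zval (s m) := by
    intro m hm
    rw [flip_apply, if_neg (Finset.ne_of_mem_erase hm)]
  rw [← h1, ← h2, Finset.prod_congr rfl h3]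
  rw [flip_apply, if_pos rfl, zval_add_one]
  ring

lemma prod_zval_pm (s : Fin L → Fin 2) :
    (∏ m, zval (s m)) = 1 ∨ (∏ m, zval (s m)) = -1 := by
  rw [← mul_self_eq_one_iff, ← Finset.prod_mul_distrib]
  apply Finset.prod_eq_one
  intro m _
  rw [zval_mul, if_pos rfl]

def dvec (j : Fin L) : Config L → ℂ := fun p => 2 * (1 - zval (p.1 j) * zval (p.2 j))

def Pmat (j : Fin L) : Matrix (Config L) (Config L) ℂ :=
  Matrix.of fun p q => if q = sigma j p then 1 else 0

lemma rungTerm_eq (j : Fin L) : rungTerm j = Matrix.diagonal (dvec j) := by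
  ext p q
  by_cases h : p = q <;> simp [rungTerm, Matrix.diagonal_apply, h, dvec]

lemma xTerm_eq (j : Fin L) : xTerm j = (2 : ℂ) • (1 - Pmat j) := rfl

lemma dvec_eq (j : Fin L) (p : Config L) : dvec j p = if p.1 j = p.2 j then 0 else 4 := by
  rw [dvec]
  rw [zval_mul]
  split_ifs <;> norm_num

lemma Pmat_mulVec (j : Fin L) (v : Config L → ℂ) :
    Pmat j *ᵥ v = fun p => v (sigma j p) := by
  funext p
  simp [Pmat, Matrix.mulVec, dotProduct, ite_mul]

lemma Pmat_mul_Pmat (j k : Fin L) :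
    Pmat j * Pmat k = Matrix.of fun p q => if q = sigma k (sigma j p) then 1 else 0 := by
  ext p q
  simp only [Pmat, Matrix.mul_apply, Matrix.of_apply, ite_mul, zero_mul, one_mul,
    Finset.sum_ite_eq', Finset.mem_univ, if_true]

lemma Pmat_sq (j : Fin L) : Pmat j * Pmat j = 1 := by
  rw [Pmat_mul_Pmat]
  ext p q
  simp [sigma_sigma, Matrix.one_apply, eq_comm]

lemma Pmat_herm (j : Fin L) : (Pmat j)ᴴ = Pmat j := by
  ext p q
  simp only [Matrix.conjTranspose_apply, Pmat, Matrix.of_apply, sigma_eq_iff j p q]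
  split_ifs <;> simp

lemma xTerm_sq (j : Fin L) : xTerm j = (1 - Pmat j)ᴴ * (1 - Pmat j) := by
  rw [xTerm_eq, Matrix.conjTranspose_sub, Matrix.conjTranspose_one, Pmat_herm]
  simp only [mul_sub, sub_mul, one_mul, mul_one, Pmat_sq]
  module

lemma dvec_nonneg (j : Fin L) (p : Config L) : 0 ≤ dvec j p := by
  rw [dvec_eq]
  split_ifs
  · exact le_refl 0
  · norm_num

lemma rung_posSemidef (j : Fin L) : (rungTerm (L := L) j).PosSemidef := by
  rw [rungTerm_eq]
  exact Matrix.posSemidef_diagonal_iff.mpr (dvec_nonneg j)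

lemma x_posSemidef (j : Fin L) : (xTerm (L := L) j).PosSemidef := by
  rw [xTerm_sq]
  exact Matrix.posSemidef_conjTranspose_mul_self _

lemma term_posSemidef (a : Fin L ⊕ Fin L) : (term L a).PosSemidef := by
  cases a with
  | inl j => exact rung_posSemidef j
  | inr j => exact x_posSemidef j

lemma PZ2_eq_sum : PZ2 L = ∑ a : Fin L ⊕ Fin L, term L a := by
  rw [PZ2, Fintype.sum_sum_type]
  rfl

lemma PZ2_posSemidef : (PZ2 L).PosSemidef := by
  rw [PZ2_eq_sum]
  exact Finset.sum_induction _ _ (fun a b ha hb => ha.add hb) Matrix.PosSemidef.zero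
    (fun a _ => term_posSemidef a)

lemma zval_pair_flip (a : Fin L) (s t : Fin L → Fin 2) (j : Fin L) :
    zval (flip a s j) * zval (flip a t j) = zval (s j) * zval (t j) := by
  rw [flip_apply, flip_apply]
  split_ifs with h
  · rw [zval_add_one, zval_add_one]; ring
  · rfl

lemma dvec_sigma (j k : Fin L) (p : Config L) : dvec j (sigma k p) = dvec j p := by
  simp only [dvec, sigma]
  rw [zval_pair_flip, zval_pair_flip]

lemma diagonal_Pmat_commute (d : Config L → ℂ) (k : Fin L)
    (hd : ∀ p, d (sigma k p) = d p) :
    Commute (Matrix.diagonal d) (Pmat k) := by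
  show _ * _ = _ * _
  ext p q
  rw [Matrix.diagonal_mul, Matrix.mul_diagonal]
  simp only [Pmat, Matrix.of_apply]
  split_ifs with h
  · subst h; rw [hd]; ring
  · ring

lemma Pmat_commute (j k : Fin L) : Commute (Pmat (L := L) j) (Pmat k) := by
  show _ * _ = _ * _
  rw [Pmat_mul_Pmat, Pmat_mul_Pmat]
  ext p q
  simp only [Matrix.of_apply, sigma_comm]

lemma term_commute (a b : Fin L ⊕ Fin L) : Commute (term L a) (term L b) := by
  have hrx : ∀ j k : Fin L, Commute (rungTerm (L := L) j) (xTerm k) := by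
    intro j k
    rw [rungTerm_eq, xTerm_eq]
    have h := diagonal_Pmat_commute (dvec j) k (dvec_sigma j k)
    have h1 : Commute (Matrix.diagonal (dvec j)) (1 - Pmat k) :=
      (Commute.one_right _).sub_right h
    exact h1.smul_right 2
  cases a with
  | inl j =>
    cases b with
    | inl k =>
      show Commute (rungTerm j) (rungTerm k)
      rw [rungTerm_eq, rungTerm_eq]
      show _ * _ = _ * _
      rw [Matrix.diagonal_mul_diagonal, Matrix.diagonal_mul_diagonal]
      exact congrArg Matrix.diagonal (funext fun p => mul_comm _ _)
    | inr k => exact hrx j k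
  | inr j =>
    cases b with
    | inl k => exact (hrx k j).symm
    | inr k =>
      show Commute (xTerm j) (xTerm k)
      rw [xTerm_eq, xTerm_eq]
      have h := Pmat_commute j k
      have h1 : Commute (1 - Pmat j) (Pmat k) := (Commute.one_left _).sub_left h
      have h2 : Commute (1 - Pmat j) (1 - Pmat k) :=
        (Commute.one_right _).sub_right h1
      exact (h2.smul_left 2).smul_right 2

lemma dot_sum {ι : Type*} (s : Finset ι) (u : Config L → ℂ) (f : ι → Config L → ℂ) :
    u ⬝ᵥ (∑ i ∈ s, f i) = ∑ i ∈ s, u ⬝ᵥ f i := by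
  simp only [dotProduct, Finset.sum_apply, Finset.mul_sum]
  rw [Finset.sum_comm]

lemma sum_mulVec {ι : Type*} (s : Finset ι) (f : ι → Matrix (Config L) (Config L) ℂ)
    (v : Config L → ℂ) : (∑ i ∈ s, f i) *ᵥ v = ∑ i ∈ s, f i *ᵥ v := by
  classical
  induction s using Finset.cons_induction with
  | empty => simp [Matrix.zero_mulVec]
  | cons a s ha ih => rw [Finset.sum_cons, Finset.sum_cons, Matrix.add_mulVec, ih]

lemma rung_mulVec (j : Fin L) (v : Config L → ℂ) :
    rungTerm j *ᵥ v = fun p => dvec j p * v p := by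
  rw [rungTerm_eq]
  funext p
  rw [Matrix.mulVec_diagonal]

lemma x_mulVec (j : Fin L) (v : Config L → ℂ) :
    xTerm j *ᵥ v = fun p => 2 * (v p - v (sigma j p)) := by
  rw [xTerm_eq, Matrix.smul_mulVec, Matrix.sub_mulVec, Matrix.one_mulVec, Pmat_mulVec]
  funext p
  simp [smul_eq_mul]

lemma flip_injective (j : Fin L) : Function.Injective (flip j) :=
  Function.LeftInverse.injective (g := flip j) (flip_flip_self j)

lemma sigma_diag_iff (j : Fin L) (p : Config L) :
    (sigma j p).1 = (sigma j p).2 ↔ p.1 = p.2 := by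
  constructor
  · intro h
    exact flip_injective (j + 1) (flip_injective j h)
  · intro h
    simp only [sigma, h]

lemma prod_sigma_fst (j : Fin L) (p : Config L) :
    ∏ m, zval ((sigma j p).1 m) = ∏ m, zval (p.1 m) := by
  show ∏ m, zval (flip j (flip (j + 1) p.1) m) = _
  rw [prod_flip, prod_flip, neg_neg]

lemma vId_sigma (j : Fin L) (p : Config L) : vId L (sigma j p) = vId L p := by
  simp only [vId]
  rw [if_congr (sigma_diag_iff j p) rfl rfl]

lemma vZ_sigma (j : Fin L) (p : Config L) : vZ L (sigma j p) = vZ L p := by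
  simp only [vZ]
  rw [if_congr (sigma_diag_iff j p) (prod_sigma_fst j p) rfl]

lemma rung_kills {v : Config L → ℂ} (hv : ∀ p : Config L, p.1 ≠ p.2 → v p = 0)
    (j : Fin L) : rungTerm j *ᵥ v = 0 := by
  rw [rung_mulVec]
  funext p
  show dvec j p * v p = 0
  by_cases h : p.1 = p.2
  · rw [dvec_eq, if_pos (congrFun h j), zero_mul]
  · rw [hv p h, mul_zero]

lemma x_kills {v : Config L → ℂ} (j : Fin L) (hv : ∀ p, v (sigma j p) = v p) :
    xTerm j *ᵥ v = 0 := by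
  rw [x_mulVec]
  funext p
  show 2 * (v p - v (sigma j p)) = 0
  rw [hv]
  ring

lemma PZ2_kills {v : Config L → ℂ} (h1 : ∀ j, rungTerm j *ᵥ v = 0)
    (h2 : ∀ j, xTerm j *ᵥ v = 0) : PZ2 L *ᵥ v = 0 := by
  rw [PZ2, Matrix.add_mulVec, sum_mulVec, sum_mulVec]
  simp [h1, h2]

lemma PZ2_kills_vId : PZ2 L *ᵥ vId L = 0 :=
  PZ2_kills (rung_kills (fun p hp => by simp [vId, hp]))
    (fun j => x_kills j (fun p => vId_sigma j p))

lemma PZ2_kills_vZ : PZ2 L *ᵥ vZ L = 0 :=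
  PZ2_kills (rung_kills (fun p hp => by simp [vZ, hp]))
    (fun j => x_kills j (fun p => vZ_sigma j p))

lemma term_kernel {v : Config L → ℂ} (h : PZ2 L *ᵥ v = 0) (a : Fin L ⊕ Fin L) :
    term L a *ᵥ v = 0 := by
  have hsum : ∑ b : Fin L ⊕ Fin L, star v ⬝ᵥ (term L b *ᵥ v) = 0 := by
    rw [← dot_sum, ← sum_mulVec, ← PZ2_eq_sum, h, dotProduct_zero]
  have hnn : ∀ b ∈ Finset.univ, (0 : ℂ) ≤ star v ⬝ᵥ (term L b *ᵥ v) :=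
    fun b _ => (term_posSemidef b).dotProduct_mulVec_nonneg v
  have h0 := (Finset.sum_eq_zero_iff_of_nonneg hnn).mp hsum a (Finset.mem_univ a)
  exact ((term_posSemidef a).dotProduct_mulVec_zero_iff v).mp h0

def c0 (L : ℕ) : Fin L → Fin 2 := fun _ => 0

lemma prod_c0 : ∏ m : Fin L, zval (c0 L m) = 1 := by
  simp [c0, zval]

open Fin.NatCast in
lemma hflip2_of_moves {v : Config L → ℂ}
    (hmove : ∀ (j : Fin L) (p : Config L), v (sigma j p) = v p)
    (j k : Fin L) (s : Fin L → Fin 2) :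
    v (flip j (flip k s), flip j (flip k s)) = v (s, s) := by
  have aux : ∀ (n : ℕ) (j : Fin L) (s : Fin L → Fin 2),
      v (flip j (flip (j + (n : Fin L)) s), flip j (flip (j + (n : Fin L)) s)) = v (s, s) := by
    intro n
    induction n with
    | zero =>
      intro j s
      rw [Nat.cast_zero, add_zero, flip_flip_self]
    | succ n ihn =>
      intro j s
      have hm : j + ((n + 1 : ℕ) : Fin L) = (j + (n : Fin L)) + 1 := by
        push_cast
        abel
      rw [hm]
      set m := j + (n : Fin L) with hmdef
      have key : flip j (flip (m + 1) s) = flip j (flip m (flip m (flip (m + 1) s))) := by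
        rw [flip_flip_self]
      rw [key]
      have h1 := ihn j (flip m (flip (m + 1) s))
      rw [← hmdef] at h1
      rw [h1]
      exact hmove m (s, s)
  have e : j + (((k - j : Fin L).val : ℕ) : Fin L) = k := by
    rw [Fin.cast_val_eq_self]
    abel
  have := aux ((k - j : Fin L).val) j s
  rwa [e] at this

lemma parity_key {v : Config L → ℂ}
    (hmove : ∀ (j : Fin L) (p : Config L), v (sigma j p) = v p) :
    ∀ (n : ℕ) (s : Fin L → Fin 2),
      (Finset.univ.filter fun m => s m = 1).card = n →
      v (s, s) = if (∏ m, zval (s m)) = 1 then v (c0 L, c0 L)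
                 else v (flip 0 (c0 L), flip 0 (c0 L)) := by
  intro n
  induction n using Nat.strong_induction_on with
  | _ n ih =>
    intro s hs
    match n, hs with
    | 0, hs =>
      have hf : (Finset.univ.filter fun m => s m = 1) = ∅ := Finset.card_eq_zero.mp hs
      have hzero : ∀ x : Fin 2, x ≠ 1 → x = 0 := by decide
      have hc : s = c0 L := by
        funext m
        have hm : m ∉ Finset.univ.filter fun m => s m = 1 := by rw [hf]; exact Finset.notMem_empty m
        simp only [Finset.mem_filter, Finset.mem_univ, true_and] at hm
        exact hzero _ hm
      rw [hc, prod_c0, if_pos rfl]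
    | 1, hs =>
      obtain ⟨k, hk⟩ := Finset.card_eq_one.mp hs
      have hsk : s = flip k (c0 L) := by
        funext m
        have hm : s m = 1 ↔ m = k := by
          have := Finset.ext_iff.mp hk m
          simpa using this
        rw [flip_apply]
        split_ifs with h
        · subst h; exact hm.mpr rfl
        · have : s m ≠ 1 := fun hc => h (hm.mp hc)
          have hzero : ∀ x : Fin 2, x ≠ 1 → x = 0 := by decide
          exact hzero _ this
      have hval : v (s, s) = v (flip 0 (c0 L), flip 0 (c0 L)) := by
        rw [hsk]
        have := hflip2_of_moves hmove 0 k (flip k (c0 L))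
        rw [flip_flip_self] at this
        exact this.symm
      have hprod : (∏ m, zval (s m)) = -1 := by
        rw [hsk, prod_flip, prod_c0]
      rw [hval, hprod, if_neg (by norm_num)]
    | (n + 2), hs =>
      have h2 : 1 < (Finset.univ.filter fun m => s m = 1).card := by omega
      obtain ⟨j, hj, k, hk, hjk⟩ := Finset.one_lt_card.mp h2
      simp only [Finset.mem_filter, Finset.mem_univ, true_and] at hj hk
      set s' := flip j (flip k s) with hs'def
      have happ : ∀ m, s' m = if m = j then s m + 1 else if m = k then s m + 1 else s m := by
        intro m
        rw [hs'def, flip_apply, flip_apply]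
        split_ifs with h1 h2
        · subst h1; subst h2; exact absurd rfl hjk
        · rfl
        · rfl
        · rfl
      have hfilter : (Finset.univ.filter fun m => s' m = 1)
          = ((Finset.univ.filter fun m => s m = 1).erase j).erase k := by
        ext m
        simp only [Finset.mem_filter, Finset.mem_univ, true_and, Finset.mem_erase]
        rw [happ m]
        split_ifs with h1 h2
        · subst h1
          rw [hj]
          constructor
          · intro h; exact absurd h (by decide)
          · rintro ⟨-, h, -⟩; exact absurd rfl h
        · subst h2
          rw [hk]
          constructor
          · intro h; exact absurd h (by decide)
          · rintro ⟨h, -⟩; exact absurd rfl h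
        · constructor
          · intro h; exact ⟨h2, h1, h⟩
          · rintro ⟨-, -, h⟩; exact h
      have hjmem : j ∈ (Finset.univ.filter fun m => s m = 1) := by
        simp [Finset.mem_filter, hj]
      have hkmem : k ∈ (Finset.univ.filter fun m => s m = 1).erase j :=
        Finset.mem_erase.mpr ⟨Ne.symm hjk, by simp [Finset.mem_filter, hk]⟩
      have hcard : (Finset.univ.filter fun m => s' m = 1).card = n := by
        rw [hfilter, Finset.card_erase_of_mem hkmem, Finset.card_erase_of_mem hjmem, hs]
        omega
      have hprod : (∏ m, zval (s' m)) = ∏ m, zval (s m) := by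
        rw [hs'def, prod_flip, prod_flip, neg_neg]
      have hv : v (s', s') = v (s, s) := hflip2_of_moves hmove j k s
      have := ih n (by omega) s' hcard
      rw [hv, hprod] at this
      exact this

end Aux

/-- All terms of `P_{Z2}` pairwise commute, `P_{Z2}` is positive semi-definite, and its
kernel is exactly 2-dimensional, spanned by the vectorizations of the identity and of
`Z_1 ⋯ Z_L`. -/
theorem z2_super_hamiltonian (L : ℕ) [NeZero L] (hL : 2 ≤ L) :
    (∀ a b, Commute (term L a) (term L b)) ∧
    (PZ2 L).PosSemidef ∧
    (∀ v : Config L → ℂ,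
        (PZ2 L).mulVec v = 0 ↔ v ∈ Submodule.span ℂ {vId L, vZ L}) ∧
    LinearIndependent ℂ ![vId L, vZ L] := by

  refine ⟨term_commute, PZ2_posSemidef, fun v => ⟨fun h => ?_, fun h => ?_⟩, ?_⟩
  · -- kernel ⊆ span
    have ht := term_kernel h
    have hdiag : ∀ p : Config L, p.1 ≠ p.2 → v p = 0 := by
      intro p hp
      rw [Function.ne_iff] at hp
      obtain ⟨j, hj⟩ := hp
      have h0 := congrFun (ht (Sum.inl j)) p
      rw [show term L (Sum.inl j) = rungTerm j from rfl, rung_mulVec] at h0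
      simp only [Pi.zero_apply] at h0
      rw [dvec_eq, if_neg hj] at h0
      exact (mul_eq_zero.mp h0).resolve_left (by norm_num)
    have hmove : ∀ (j : Fin L) (p : Config L), v (sigma j p) = v p := by
      intro j p
      have h0 := congrFun (ht (Sum.inr j)) p
      rw [show term L (Sum.inr j) = xTerm j from rfl, x_mulVec] at h0
      simp only [Pi.zero_apply] at h0
      have h1 : v p - v (sigma j p) = 0 :=
        (mul_eq_zero.mp h0).resolve_left (by norm_num)
      exact (sub_eq_zero.mp h1).symm
    set a := v (c0 L, c0 L) with ha
    set b := v (flip 0 (c0 L), flip 0 (c0 L)) with hb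
    have hva : v = ((a + b) / 2) • vId L + ((a - b) / 2) • vZ L := by
      funext p
      obtain ⟨s, t⟩ := p
      by_cases hst : s = t
      · subst hst
        have hk := parity_key hmove _ s rfl
        simp only [Pi.add_apply, Pi.smul_apply, vId, vZ, smul_eq_mul, if_pos rfl]
        rcases prod_zval_pm s with h1 | h1
        · rw [h1] at hk
          rw [hk, if_pos rfl, h1]
          norm_num
          rw [← ha]
          ring
        · rw [h1] at hk
          rw [hk, if_neg (by norm_num), h1]
          norm_num
          rw [← hb]
          ring
      · simp only [Pi.add_apply, Pi.smul_apply, vId, vZ, smul_eq_mul, if_neg hst]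
        rw [hdiag (s, t) hst]
        ring
    exact Submodule.mem_span_pair.mpr ⟨(a + b) / 2, (a - b) / 2, hva.symm⟩
  · -- span ⊆ kernel
    obtain ⟨c, d, rfl⟩ := Submodule.mem_span_pair.mp h
    rw [Matrix.mulVec_add, Matrix.mulVec_smul, Matrix.mulVec_smul,
      PZ2_kills_vId, PZ2_kills_vZ]
    simp
  · -- linear independence
    rw [LinearIndependent.pair_iff]
    intro c d hcd
    have h1 := congrFun hcd (c0 L, c0 L)
    have h2 := congrFun hcd (flip 0 (c0 L), flip 0 (c0 L))
    simp only [Pi.add_apply, Pi.smul_apply, vId, vZ, smul_eq_mul, if_pos rfl,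
      Pi.zero_apply] at h1 h2
    rw [prod_c0] at h1
    have hpf : (∏ m, zval (flip 0 (c0 L) m)) = -1 := by
      rw [prod_flip, prod_c0]
    rw [hpf] at h2
    norm_num at h1 h2
    constructor
    · linear_combination (h1 + h2) / 2
    · linear_combination (h1 - h2) / 2

end Z2Super
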